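/- Let F be a finite family of integer intervals satisfying the facet conditions above. If (α,β) ∈ F and (α,β′) ∈ F with β < β′, and the open interval (β,β′) contains no leaf of the tree of F, then (α,β+j) ∈ F for every integer j with 0 < j < β′ − β. -/

import Mathlib

namespace ScrollComb

/-- Open intervals with integer endpoints, identified with pairs `(a, b)`, `a < b`. -/
abbrev Iv : Type := ℤ × ℤ

/-- `I` is contained in `J` as open real intervals. -/
def Sub (I J : Iv) : Prop := J.1 ≤ I.1 ∧ I.2 ≤ J.2

/-- The length of an interval. -/
def len (I : Iv) : ℤ := I.2 - I.1

/-- Two open intervals with integer endpoints are disjoint. -/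
def Disj (I J : Iv) : Prop := I.2 ≤ J.1 ∨ J.2 ≤ I.1

/-- `I` is a child of `J` in the Hasse diagram of `(F, ⊆)`:  `I ⊊ J` and nothing of `F`
lies strictly between them. -/
def IsChild (F : Finset Iv) (I J : Iv) : Prop :=
  I ∈ F ∧ J ∈ F ∧ Sub I J ∧ I ≠ J ∧
    ∀ K ∈ F, Sub I K → Sub K J → K = I ∨ K = J

/-- `I` is a leaf (a minimal element) of the family `F`. -/
def IsLeaf (F : Finset Iv) (I : Iv) : Prop :=
  I ∈ F ∧ ∀ K ∈ F, Sub K I → K = I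

/-- The prescribed leaves set `𝔏_α`: the unit intervals `(β, β+1)` for
`β ∈ {α, …, α+ℓ} ∪ {c-d+ℓ-1, …, c-1}`. -/
noncomputable def leavesSet (c d α ℓ : ℤ) : Finset Iv :=
  (Finset.Icc α (α + ℓ) ∪ Finset.Icc (c - d + ℓ - 1) (c - 1)).image fun β => (β, β + 1)

/-- The structural conditions on a facet family:  a non-crossing family of open integer
subintervals of `(1, c)` whose Hasse diagram under inclusion is a rooted binary tree with
root `(1, c)`, satisfying the length conditions on nodes with one child resp. two children. -/
structure IsTreeFam (c : ℤ) (F : Finset Iv) : Prop where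
  bounds : ∀ I ∈ F, 1 ≤ I.1 ∧ I.1 < I.2 ∧ I.2 ≤ c
  root_mem : ((1 : ℤ), c) ∈ F
  noncrossing : ∀ I ∈ F, ∀ J ∈ F, Disj I J ∨ Sub I J ∨ Sub J I
  binary : ∀ J ∈ F, {I | IsChild F I J}.ncard ≤ 2
  one_child : ∀ J ∈ F, ∀ I, IsChild F I J → (∀ I', IsChild F I' J → I' = I) →
    len J = len I + 1 ∧ (J.1 < I.1 → (J.1, J.1 + 1) ∉ F) ∧ (I.2 < J.2 → (I.2, I.2 + 1) ∉ F)
  two_children : ∀ J ∈ F, ∀ I₁ I₂, IsChild F I₁ J → IsChild F I₂ J → I₁ ≠ I₂ →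
    Disj I₁ I₂ ∧ len I₁ + len I₂ = len J

/-- A facet family with prescribed leaves data `(α, ℓ)`. -/
structure IsScrollFacetWith (c d α ℓ : ℤ) (F : Finset Iv) : Prop where
  tree : IsTreeFam c F
  α_lb : 1 ≤ α
  α_ub : α ≤ c - d - 2
  ℓ_lb : 2 ≤ ℓ
  ℓ_ub : ℓ ≤ d + 1
  leaves : ∀ I, IsLeaf F I ↔ I ∈ leavesSet c d α ℓ

/-- A facet of the initial complex of the fiber cone of a rational normal scroll. -/
def IsScrollFacet (c d : ℤ) (F : Finset Iv) : Prop :=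
  ∃ α ℓ, IsScrollFacetWith c d α ℓ F

lemma sub_antisymm {I J : Iv} (h1 : Sub I J) (h2 : Sub J I) : I = J := by
  obtain ⟨a, b⟩ := I; obtain ⟨x, y⟩ := J
  obtain ⟨h11, h12⟩ := h1; obtain ⟨h21, h22⟩ := h2
  simp only [Prod.mk.injEq]
  constructor <;> omega

lemma exists_leaf_sub (F : Finset Iv) (I : Iv) (hI : I ∈ F) :
    ∃ L, IsLeaf F L ∧ Sub L I := by
  classical
  set S := F.filter (fun K => Sub K I) with hS
  have hne : S.Nonempty := ⟨I, by rw [hS, Finset.mem_filter]; exact ⟨hI, le_refl _, le_refl _⟩⟩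
  obtain ⟨L, hLS, hmin⟩ := S.exists_min_image len hne
  rw [hS, Finset.mem_filter] at hLS
  refine ⟨L, ⟨hLS.1, ?_⟩, hLS.2⟩
  intro K hK hKL
  have hKS : K ∈ S := by
    rw [hS, Finset.mem_filter]
    exact ⟨hK, ⟨le_trans hLS.2.1 hKL.1, le_trans hKL.2 hLS.2.2⟩⟩
  have := hmin K hKS
  obtain ⟨k1, k2⟩ := K; obtain ⟨l1, l2⟩ := L
  obtain ⟨h1, h2⟩ := hKL
  simp only [len] at this
  simp only [Prod.mk.injEq]
  simp only at h1 h2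
  constructor <;> omega

/-- Step lemma: if `(a,x) ∈ F`, `(a,β') ∈ F`, `x < β'` and no leaf lies in `(x, β')`,
then `(a, x+1) ∈ F`. -/
lemma step (c : ℤ) (F : Finset Iv) (hT : IsTreeFam c F) (a x β' : ℤ)
    (h1 : (a, x) ∈ F) (h2 : (a, β') ∈ F) (hx : x < β')
    (hnl : ∀ L, IsLeaf F L → ¬ Sub L (x, β')) : (a, x + 1) ∈ F := by
  classical
  have hax : a < x := (hT.bounds _ h1).2.1
  set S := F.filter (fun K => Sub (a, x) K ∧ K ≠ (a, x)) with hS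
  have hβ'S : (a, β') ∈ S := by
    rw [hS, Finset.mem_filter]
    refine ⟨h2, ⟨le_refl a, le_of_lt hx⟩, ?_⟩
    simp only [ne_eq, Prod.mk.injEq, not_and]
    omega
  obtain ⟨J, hJS, hmin⟩ := S.exists_min_image len ⟨_, hβ'S⟩
  rw [hS, Finset.mem_filter] at hJS
  obtain ⟨hJF, hJsub, hJne⟩ := hJS
  -- J is below every element of S
  have hbelow : ∀ K ∈ S, Sub J K := by
    intro K hKS
    rw [hS, Finset.mem_filter] at hKS
    obtain ⟨hKF, hKsub, hKne⟩ := hKS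
    rcases hT.noncrossing J hJF K hKF with hd | hs | hs
    · exfalso
      rcases hd with hd | hd
      · have : x ≤ J.2 := hJsub.2
        have : K.1 ≤ a := hKsub.1
        omega
      · have : x ≤ K.2 := hKsub.2
        have : J.1 ≤ a := hJsub.1
        omega
    · exact hs
    · -- Sub K J, by minimality K = J
      have hKS' : K ∈ S := by
        rw [hS, Finset.mem_filter]; exact ⟨hKF, hKsub, hKne⟩
      have hlen := hmin K hKS'
      have : K = J := by
        obtain ⟨k1, k2⟩ := K; obtain ⟨j1, j2⟩ := J
        obtain ⟨hs1, hs2⟩ := hs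
        simp only [len] at hlen
        simp only at hs1 hs2
        simp only [Prod.mk.injEq]
        constructor <;> omega
      rw [this]
      exact ⟨le_refl _, le_refl _⟩
  have hJβ' : Sub J (a, β') := hbelow _ hβ'S
  have hJ1 : J.1 = a := le_antisymm hJsub.1 hJβ'.1
  have hJ2 : x < J.2 := by
    rcases lt_or_eq_of_le hJsub.2 with h | h
    · exact h
    · exfalso; apply hJne
      obtain ⟨j1, j2⟩ := J
      simp only at hJ1 h
      simp [Prod.mk.injEq, hJ1, h.symm]
  have hJ2' : J.2 ≤ β' := hJβ'.2
  -- (a,x) is a child of J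
  have hchild : IsChild F (a, x) J := by
    refine ⟨h1, hJF, hJsub, fun h => hJne h.symm, ?_⟩
    intro K hKF hK1 hK2
    by_cases hKe : K = (a, x)
    · exact Or.inl hKe
    · right
      have hKS : K ∈ S := by
        rw [hS, Finset.mem_filter]; exact ⟨hKF, hK1, hKe⟩
      exact sub_antisymm hK2 (hbelow K hKS)
  by_cases huniq : ∀ I', IsChild F I' J → I' = (a, x)
  · have := (hT.one_child J hJF (a, x) hchild huniq).1
    have hlen : J.2 - J.1 = x - a + 1 := this
    have : J = (a, x + 1) := by
      obtain ⟨j1, j2⟩ := J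
      simp only at hJ1 hlen
      simp only [Prod.mk.injEq]
      constructor <;> omega
    rwa [this] at hJF
  · push_neg at huniq
    obtain ⟨I₂, hI₂c, hI₂ne⟩ := huniq
    obtain ⟨hdisj, hlen⟩ := hT.two_children J hJF (a, x) I₂ hchild hI₂c (fun h => hI₂ne h.symm)
    have hI₂F : I₂ ∈ F := hI₂c.1
    have hI₂b := hT.bounds _ hI₂F
    have hI₂sub : Sub I₂ J := hI₂c.2.2.1
    have hI₂eq : I₂ = (x, J.2) := by
      obtain ⟨i1, i2⟩ := I₂
      rcases hdisj with hd | hd <;>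
      · simp only [len] at hlen
        simp only at hd hI₂b hI₂sub
        obtain ⟨s1, s2⟩ := hI₂sub
        simp only [Prod.mk.injEq]
        constructor <;> omega
    obtain ⟨L, hL, hLsub⟩ := exists_leaf_sub F I₂ hI₂F
    exact absurd ⟨by rw [hI₂eq] at hLsub; exact hLsub.1,
      le_trans (by rw [hI₂eq] at hLsub; exact hLsub.2) hJ2'⟩ (hnl L hL)

/-- If `(a,β) ∈ F` and `(a,β') ∈ F` with `β < β'` and the open interval
`(β,β')` contains no leaf of the tree of `F`, then `(a, β + j) ∈ F` for `0 < j < β' − β`. -/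
theorem mem_of_no_leaf_between (c d : ℤ) (F : Finset Iv) (hF : IsScrollFacet c d F)
    (a β β' : ℤ) (h₁ : (a, β) ∈ F) (h₂ : (a, β') ∈ F) (hββ' : β < β')
    (hnoleaf : ∀ L : Iv, IsLeaf F L → ¬ Sub L (β, β')) :
    ∀ j : ℤ, 0 < j → j < β' - β → (a, β + j) ∈ F := by
  obtain ⟨α, ℓ, hW⟩ := hF
  have hT := hW.tree
  have key : ∀ n : ℕ, (n : ℤ) < β' - β → (a, β + n) ∈ F := by
    intro n
    induction n with
    | zero => intro _; simpa using h₁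
    | succ n ih =>
      intro hn
      push_cast at hn ⊢
      have hmem : (a, β + n) ∈ F := ih (by push_cast; omega)
      have := step c F hT a (β + n) β' hmem h₂ (by omega)
        (fun L hL hsub => hnoleaf L hL ⟨by have := hsub.1; simp at this ⊢; omega, hsub.2⟩)
      rwa [show β + (n : ℤ) + 1 = β + ((n : ℤ) + 1) by ring] at this
  intro j hj0 hj
  have : (a, β + (j.toNat : ℤ)) ∈ F := key j.toNat (by omega)
  rwa [Int.toNat_of_nonneg (le_of_lt hj0)] at this

end ScrollComb
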